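/- Every I-favorable space is universally Kuratowski-Ulam*: if Y is I-favorable, then for every topological space X and every nowhere dense E ⊆ X × Y, the set {x ∈ X : E_x is not nowhere dense in Y} is meager in X. -/

import Mathlib

open Set TopologicalSpace

variable (X : Type*) [TopologicalSpace X]

/-- A valid move of Player I: a finite family of nonempty open sets. -/
def IMove (A : Set (Set X)) : Prop :=
  A.Finite ∧ ∀ U ∈ A, IsOpen U ∧ U.Nonempty

/-- A valid response of Player II to the family `A`: a finite family of nonempty
open sets such that every member of `A` contains some member of `B`. -/
def IIMove (A B : Set (Set X)) : Prop :=
  IMove X B ∧ ∀ U ∈ A, ∃ V ∈ B, V ⊆ U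

/-- `X` is I-favorable: Player I has a winning strategy in the finite open-open
game. A strategy is a function from histories of Player II's moves to the next
move of Player I; it is winning if for every play in which Player II always
responds validly, each tail union of Player II's families is dense. -/
def IFavorable : Prop :=
  ∃ σ : List (Set (Set X)) → Set (Set X),
    (∀ hist, IMove X (σ hist)) ∧
    ∀ B : ℕ → Set (Set X),
      (∀ n, IIMove X (σ ((List.range n).map B)) (B n)) →
      ∀ k, Dense (⋃ (n : ℕ) (_ : k ≤ n), ⋃₀ B n)

/-- Player II has a winning strategy in the finite open-open game: a function
from histories of Player I's moves to responses of Player II which are valid,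
and such that whenever Player I plays validly, some tail union of Player II's
families fails to be dense. -/
def IIFavorable : Prop :=
  ∃ τ : List (Set (Set X)) → Set (Set X),
    ∀ A : ℕ → Set (Set X), (∀ n, IMove X (A n)) →
      (∀ n, IIMove X (A n) (τ ((List.range (n + 1)).map A))) ∧
      ∃ k, ¬ Dense (⋃ (n : ℕ) (_ : k ≤ n), ⋃₀ τ ((List.range (n + 1)).map A))

/-- `Q` is a π-base for `X`: a family of nonempty open sets such that every
nonempty open set contains a member of the family. -/
def IsPiBase (Q : Set (Set X)) : Prop :=
  (∀ U ∈ Q, IsOpen U ∧ U.Nonempty) ∧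
  ∀ V : Set X, IsOpen V → V.Nonempty → ∃ U ∈ Q, U ⊆ V

/-- `C` is a club filter with respect to the π-base `Q`. -/
def IsClubFilter (Q : Set (Set X)) (C : Set (Set (Set X))) : Prop :=
  (∀ P ∈ C, P.Countable ∧ P ⊆ Q) ∧
  (∀ P : ℕ → Set (Set X), (∀ n, P n ∈ C) → Monotone P → (⋃ n, P n) ∈ C) ∧
  (∀ A : Set (Set X), A.Countable → A ⊆ Q → ∃ P ∈ C, A ⊆ P) ∧
  (∀ V : Set X, IsOpen V → V.Nonempty →
    ∀ P ∈ C, ∃ W ∈ P, ∀ U ∈ P, U ⊆ W → (U ∩ V).Nonempty)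

universe u

section Aux

variable {Z : Type*} {Y : Type*} [TopologicalSpace Z] [TopologicalSpace Y]

/-- Inside any nonempty open subset of the base space, one can find a nonempty open
set `G` together with a valid response `Bm` to the move `F` such that `G × V ⊆ W`
for every `V ∈ Bm`. -/
lemma exists_pair_aux (W : Set (Z × Y)) (hWo : IsOpen W) (hWd : Dense W)
    (F : Set (Set Y)) (hF : IMove Y F) (O : Set Z) (hO : IsOpen O) (hne : O.Nonempty) :
    ∃ (G : Set Z) (Bm : Set (Set Y)), IsOpen G ∧ G.Nonempty ∧ G ⊆ O ∧
      IIMove Y F Bm ∧ ∀ V ∈ Bm, ∀ a ∈ G, ∀ b ∈ V, (a, b) ∈ W := by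
  have main : ∀ F : Set (Set Y), F.Finite → (∀ U ∈ F, IsOpen U ∧ U.Nonempty) →
      ∀ O : Set Z, IsOpen O → O.Nonempty →
      ∃ (G : Set Z) (Bm : Set (Set Y)), IsOpen G ∧ G.Nonempty ∧ G ⊆ O ∧
        IIMove Y F Bm ∧ ∀ V ∈ Bm, ∀ a ∈ G, ∀ b ∈ V, (a, b) ∈ W := by
    intro F hfin
    refine Set.Finite.induction_on F hfin ?_ ?_
    · intro _ O hO hne
      exact ⟨O, ∅, hO, hne, Subset.rfl,
        ⟨⟨finite_empty, by simp⟩, by simp⟩, by simp⟩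
    · intro U F hUF hFfin ih hmemF O hO hne
      have hU := hmemF U (mem_insert _ _)
      have hmem' : ∀ V ∈ F, IsOpen V ∧ V.Nonempty :=
        fun V hV => hmemF V (mem_insert_of_mem _ hV)
      obtain ⟨G₁, B₁, hG₁o, hG₁ne, hG₁O, ⟨hB₁move, hB₁ref⟩, hbox₁⟩ := ih hmem' O hO hne
      have hprod : IsOpen (W ∩ (G₁ ×ˢ U)) := hWo.inter (hG₁o.prod hU.1)
      have hnonempty : ((G₁ ×ˢ U) ∩ W).Nonempty :=
        hWd.inter_open_nonempty _ (hG₁o.prod hU.1) (hG₁ne.prod hU.2)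
      obtain ⟨⟨a, b⟩, hab, habW⟩ := hnonempty
      obtain ⟨u, v, hu, hv, hau, hbv, huv⟩ :=
        isOpen_prod_iff.1 hprod a b ⟨habW, hab⟩
      have husub : u ⊆ G₁ := fun z hz => (huv (mk_mem_prod hz hbv)).2.1
      refine ⟨u, insert v B₁, hu, ⟨a, hau⟩, fun z hz => hG₁O (husub hz), ⟨⟨hB₁move.1.insert v, ?_⟩, ?_⟩, ?_⟩
      · rintro V (rfl | hV)
        · exact ⟨hv, ⟨b, hbv⟩⟩
        · exact hB₁move.2 V hV
      · rintro U' (rfl | hU')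
        · exact ⟨v, mem_insert _ _, fun y hy => (huv (mk_mem_prod hau hy)).2.2⟩
        · obtain ⟨V, hV, hVU⟩ := hB₁ref U' hU'
          exact ⟨V, mem_insert_of_mem _ hV, hVU⟩
      · rintro V (rfl | hV) a' ha' b' hb'
        · exact (huv (mk_mem_prod ha' hb')).1
        · exact hbox₁ V hV a' (husub ha') b' hb'
  exact main F hF.1 hF.2 O hO hne

/-- A maximal pairwise-disjoint family of "good" pairs below an open set `G`;
its first coordinates have union dense in `G`. -/
lemma exists_maximal_family (W : Set (Z × Y)) (hWo : IsOpen W) (hWd : Dense W)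
    (F : Set (Set Y)) (hF : IMove Y F) (G : Set Z) :
    ∃ s : Set (Set Z × Set (Set Y)),
      (∀ p ∈ s, IsOpen p.1 ∧ p.1.Nonempty ∧ p.1 ⊆ G ∧ IIMove Y F p.2 ∧
        ∀ V ∈ p.2, ∀ a ∈ p.1, ∀ b ∈ V, (a, b) ∈ W) ∧
      (∀ p ∈ s, ∀ q ∈ s, p ≠ q → p.1 ∩ q.1 = ∅) ∧
      (IsOpen G → G ⊆ closure (⋃ p ∈ s, (p : Set Z × Set (Set Y)).1)) := by
  classical
  set good : Set Z × Set (Set Y) → Prop := fun p =>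
    IsOpen p.1 ∧ p.1.Nonempty ∧ p.1 ⊆ G ∧ IIMove Y F p.2 ∧
      ∀ V ∈ p.2, ∀ a ∈ p.1, ∀ b ∈ V, (a, b) ∈ W with hgood
  set S : Set (Set (Set Z × Set (Set Y))) :=
    {s | (∀ p ∈ s, good p) ∧ ∀ p ∈ s, ∀ q ∈ s, p ≠ q → p.1 ∩ q.1 = ∅} with hS
  obtain ⟨m, hm⟩ : ∃ m, Maximal (· ∈ S) m := by
    apply zorn_subset
    intro c hcS hchain
    refine ⟨⋃₀ c, ⟨?_, ?_⟩, fun s hs => subset_sUnion_of_mem hs⟩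
    · rintro p ⟨s, hs, hp⟩
      exact (hcS hs).1 p hp
    · rintro p ⟨s, hs, hp⟩ q ⟨t, ht, hq⟩ hpq
      rcases hchain.total hs ht with h | h
      · exact (hcS ht).2 p (h hp) q hq hpq
      · exact (hcS hs).2 p hp q (h hq) hpq
  refine ⟨m, fun p hp => hm.1.1 p hp, hm.1.2, ?_⟩
  intro hG x hxG
  rw [mem_closure_iff]
  intro o ho hxo
  by_contra hcon
  rw [not_nonempty_iff_eq_empty] at hcon
  obtain ⟨G'', Bm, hG''o, hG''ne, hG''sub, hBm, hbox⟩ :=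
    exists_pair_aux W hWo hWd F hF (o ∩ G) (ho.inter hG) ⟨x, hxo, hxG⟩
  have hdisj : ∀ p ∈ m, p.1 ∩ G'' = ∅ := by
    intro p hp
    rw [eq_empty_iff_forall_notMem]
    rintro z ⟨hz1, hz2⟩
    have : z ∈ o ∩ ⋃ p ∈ m, (p : Set Z × Set (Set Y)).1 :=
      ⟨(hG''sub hz2).1, mem_iUnion₂.2 ⟨p, hp, hz1⟩⟩
    rw [hcon] at this
    exact this
  have hnmem : (G'', Bm) ∉ m := by
    intro hmem
    have := hdisj (G'', Bm) hmem
    rw [inter_self] at this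
    exact hG''ne.ne_empty this
  have hins : insert (G'', Bm) m ∈ S := by
    constructor
    · rintro p (rfl | hp)
      · exact ⟨hG''o, hG''ne, fun z hz => (hG''sub hz).2, hBm, hbox⟩
      · exact hm.1.1 p hp
    · rintro p (rfl | hp) q (rfl | hq) hpq
      · exact absurd rfl hpq
      · rw [inter_comm]; exact hdisj q hq
      · exact hdisj p hp
      · exact hm.1.2 p hp q hq hpq
  have : insert (G'', Bm) m ⊆ m := hm.2 hins (subset_insert _ _)
  exact hnmem (this (mem_insert _ _))

end Aux

/-- Every I-favorable space is universally Kuratowski-Ulam*. -/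
theorem uKUstar_of_iFavorable (Y : Type*) [TopologicalSpace Y]
    (hY : IFavorable Y) :
    ∀ (Z : Type u) [TopologicalSpace Z] (E : Set (Z × Y)), IsNowhereDense E →
      IsMeagre {x : Z | ¬ IsNowhereDense {y : Y | (x, y) ∈ E}} := by
  classical
  obtain ⟨σ, hσ1, hσ2⟩ := hY
  intro Z _ E hE
  set W : Set (Z × Y) := (closure E)ᶜ with hWdef
  have hWo : IsOpen W := isClosed_closure.isOpen_compl
  have hWd : Dense W := interior_eq_empty_iff_dense_compl.1 hE
  -- choose maximal families
  have key := fun (G : Set Z) (h : List (Set (Set Y))) =>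
    exists_maximal_family W hWo hWd (σ h) (hσ1 h) G
  choose S hS1 hS2 hS3 using key
  -- the tree of nodes
  set T : ℕ → Set (Set Z × List (Set (Set Y))) := fun n =>
    Nat.rec {((univ : Set Z), ([] : List (Set (Set Y))))}
      (fun _ Tn => {ν' | ∃ ν ∈ Tn, ∃ Bm, (ν'.1, Bm) ∈ S ν.1 ν.2 ∧ ν'.2 = ν.2 ++ [Bm]}) n
    with hT
  have hT0 : T 0 = {((univ : Set Z), ([] : List (Set (Set Y))))} := rfl
  have hTsucc : ∀ n, T (n + 1) =
      {ν' | ∃ ν ∈ T n, ∃ Bm, (ν'.1, Bm) ∈ S ν.1 ν.2 ∧ ν'.2 = ν.2 ++ [Bm]} := fun n => rfl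
  -- invariant: open first coordinates
  have inv1 : ∀ n, ∀ ν ∈ T n, IsOpen ν.1 := by
    intro n
    induction n with
    | zero => rintro ν rfl; exact isOpen_univ
    | succ n ih =>
      rintro ν ⟨p, hp, Bm, hmem, hhist⟩
      exact (hS1 p.1 p.2 _ hmem).1
  -- invariant: disjointness
  have inv2 : ∀ n, ∀ ν ∈ T n, ∀ ν' ∈ T n, ν ≠ ν' → ν.1 ∩ ν'.1 = ∅ := by
    intro n
    induction n with
    | zero => rintro ν rfl ν' rfl h; exact absurd rfl h
    | succ n ih =>
      rintro ν ⟨p, hp, Bm, hmem, hhist⟩ ν' ⟨p', hp', Bm', hmem', hhist'⟩ hne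
      by_cases hpp : p = p'
      · subst hpp
        have hpairne : ((ν.1, Bm) : Set Z × Set (Set Y)) ≠ (ν'.1, Bm') := by
          intro heq
          apply hne
          rw [Prod.mk.injEq] at heq
          obtain ⟨h1, h2⟩ := heq
          have : ν.2 = ν'.2 := by rw [hhist, hhist', h2]
          exact Prod.ext h1 this
        exact hS2 p.1 p.2 _ hmem _ hmem' hpairne
      · have h1 : ν.1 ⊆ p.1 := (hS1 p.1 p.2 _ hmem).2.2.1
        have h2 : ν'.1 ⊆ p'.1 := (hS1 p'.1 p'.2 _ hmem').2.2.1
        have := ih p hp p' hp' hpp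
        exact eq_empty_of_subset_empty (this ▸ inter_subset_inter h1 h2)
  -- the dense open sets
  set D : ℕ → Set Z := fun n => ⋃ ν ∈ T n, (ν : Set Z × List (Set (Set Y))).1 with hD
  have hDopen : ∀ n, IsOpen (D n) := fun n =>
    isOpen_biUnion (fun ν hν => inv1 n ν hν)
  have hDdense : ∀ n, Dense (D n) := by
    intro n
    induction n with
    | zero =>
      have : D 0 = univ := by
        apply eq_univ_of_univ_subset
        intro z _
        exact mem_iUnion₂.2 ⟨(univ, []), rfl, mem_univ z⟩
      rw [this]; exact dense_univ
    | succ n ih =>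
      have hsub : D n ⊆ closure (D (n + 1)) := by
        rintro z hz
        obtain ⟨ν, hν, hzν⟩ := mem_iUnion₂.1 hz
        have hcl := hS3 ν.1 ν.2 (inv1 n ν hν) hzν
        refine closure_mono ?_ hcl
        rintro w hw
        obtain ⟨p, hp, hwp⟩ := mem_iUnion₂.1 hw
        refine mem_iUnion₂.2 ⟨(p.1, ν.2 ++ [p.2]), ?_, hwp⟩
        exact ⟨ν, hν, p.2, hp, rfl⟩
      rw [dense_iff_closure_eq] at ih ⊢
      apply eq_univ_of_univ_subset
      calc univ = closure (D n) := ih.symm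
        _ ⊆ closure (closure (D (n + 1))) := closure_mono hsub
        _ = closure (D (n + 1)) := closure_closure
  -- the main inclusion
  have hincl : {x : Z | ¬ IsNowhereDense {y : Y | (x, y) ∈ E}} ⊆ ⋃ n, (D n)ᶜ := by
    intro x hx
    by_contra hxn
    apply hx
    have hxD : ∀ n, x ∈ D n := by
      intro n
      by_contra h
      exact hxn (mem_iUnion.2 ⟨n, h⟩)
    -- choose the branch
    have hnode : ∀ n, ∃ p, p ∈ T n ∧ x ∈ (p : Set Z × List (Set (Set Y))).1 := by
      intro n
      obtain ⟨p, hp, hxp⟩ := mem_iUnion₂.1 (hxD n)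
      exact ⟨p, hp, hxp⟩
    choose ν hν hxν using hnode
    have huniq : ∀ n, ∀ p ∈ T n, x ∈ (p : Set Z × List (Set (Set Y))).1 → p = ν n := by
      intro n p hp hxp
      by_contra hne
      have := inv2 n p hp (ν n) (hν n) hne
      exact absurd this (by
        rw [eq_empty_iff_forall_notMem]
        push_neg
        exact ⟨x, hxp, hxν n⟩)
    have hpar : ∀ n, ∃ Bm, ((ν (n + 1)).1, Bm) ∈ S (ν n).1 (ν n).2 ∧
        (ν (n + 1)).2 = (ν n).2 ++ [Bm] := by
      intro n
      obtain ⟨p, hp, Bm, hmem, hhist⟩ := hν (n + 1)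
      have hsub : (ν (n + 1)).1 ⊆ p.1 := (hS1 p.1 p.2 _ hmem).2.2.1
      have : p = ν n := huniq n p hp (hsub (hxν (n + 1)))
      subst this
      exact ⟨Bm, hmem, hhist⟩
    choose Bs hBs1 hBs2 using hpar
    have hhist : ∀ n, (ν n).2 = (List.range n).map Bs := by
      intro n
      induction n with
      | zero =>
        have h0 : ν 0 ∈ T 0 := hν 0
        rw [hT0, mem_singleton_iff] at h0
        rw [h0]
        simp
      | succ n ih =>
        rw [hBs2 n, ih, List.range_succ, List.map_append]
        rfl
    have hplay : ∀ n, IIMove Y (σ ((List.range n).map Bs)) (Bs n) := by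
      intro n
      have := (hS1 (ν n).1 (ν n).2 _ (hBs1 n)).2.2.2.1
      rwa [hhist n] at this
    have hdense := hσ2 Bs hplay 0
    have hWx : Dense {y : Y | (x, y) ∈ W} := by
      apply hdense.mono
      rintro y hy
      simp only [mem_iUnion] at hy
      obtain ⟨n, -, V, hV, hyV⟩ := hy
      have hbox := (hS1 (ν n).1 (ν n).2 _ (hBs1 n)).2.2.2.2
      exact hbox V hV x (hxν (n + 1)) y hyV
    -- conclude E_x is nowhere dense
    have hclosed : IsClosed {y : Y | (x, y) ∈ closure E} :=
      IsClosed.preimage (Continuous.prodMk_right x) isClosed_closure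
    have hsubE : {y : Y | (x, y) ∈ E} ⊆ {y : Y | (x, y) ∈ closure E} :=
      fun y hy => subset_closure hy
    have hclsub : closure {y : Y | (x, y) ∈ E} ⊆ {y : Y | (x, y) ∈ closure E} :=
      closure_minimal hsubE hclosed
    have hcompl : {y : Y | (x, y) ∈ closure E} = {y : Y | (x, y) ∈ W}ᶜ := by
      ext y
      simp [hWdef]
    rw [IsNowhereDense]
    have h1 : interior (closure {y : Y | (x, y) ∈ E}) ⊆
        interior ({y : Y | (x, y) ∈ W}ᶜ) := by
      apply interior_mono
      rw [← hcompl]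
      exact hclsub
    rw [interior_compl, hWx.closure_eq, compl_univ] at h1
    exact eq_empty_of_subset_empty h1
  -- finish: the right-hand side is meagre
  apply IsMeagre.mono hincl
  apply isMeagre_iUnion
  intro n
  rw [isMeagre_iff_countable_union_isNowhereDense]
  refine ⟨{(D n)ᶜ}, ?_, countable_singleton _, by simp⟩
  rintro t rfl
  rw [IsNowhereDense, IsClosed.closure_eq (hDopen n).isClosed_compl, interior_compl,
    (hDdense n).closure_eq, compl_univ]
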